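/- Let λ, μ, β > 0 with λ > 2μβ, set ρ = λ/μ, and for t ≥ 0 let Ψ(t) be the unique y ∈ [0, β) satisfying (1 − y/β)^{ρ/2} e^{y + μt} = 1. Then Ψ(0) = 0, Ψ is continuously differentiable and strictly increasing on [0,∞), 0 ≤ Ψ(t) < β for all t, and Ψ satisfies Ψ′(t) = 2μ²(β − Ψ(t)) / (λ − 2μ(β − Ψ(t))) for all t ≥ 0; equivalently, Ψ(t) = μ∫₀ᵗ 2μ(β − Ψ(u)) / (λ − 2μ(β − Ψ(u))) du for all t ≥ 0. -/

import Mathlib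

open Real Set intervalIntegral

theorem decay_function_ode
    (lam mu beta rho : ℝ) (hlam : 0 < lam) (hmu : 0 < mu) (hbeta : 0 < beta)
    (hstable : 2 * mu * beta < lam) (hrho : rho = lam / mu)
    (Psi : ℝ → ℝ)
    (hPsi : ∀ t, 0 ≤ t → Psi t ∈ Set.Ico 0 beta ∧
      (1 - Psi t / beta) ^ (rho / 2) * Real.exp (Psi t + mu * t) = 1) :
    Psi 0 = 0 ∧
    StrictMonoOn Psi (Set.Ici 0) ∧
    (∀ t, 0 ≤ t → 0 ≤ Psi t ∧ Psi t < beta) ∧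
    (∀ t, 0 ≤ t → HasDerivWithinAt Psi
      (2 * mu ^ 2 * (beta - Psi t) / (lam - 2 * mu * (beta - Psi t))) (Set.Ici 0) t) ∧
    ContinuousOn
      (fun t => 2 * mu ^ 2 * (beta - Psi t) / (lam - 2 * mu * (beta - Psi t)))
      (Set.Ici 0) ∧
    (∀ t, 0 ≤ t → Psi t =
      mu * ∫ u in (0:ℝ)..t,
        2 * mu * (beta - Psi u) / (lam - 2 * mu * (beta - Psi u))) := by
  have hrho2 : 2 * beta < rho := by
    rw [hrho, lt_div_iff₀ hmu]; nlinarith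
  set g : ℝ → ℝ := fun y => rho / 2 * Real.log (1 - y / beta) + y with hg
  -- basic positivity
  have hbase : ∀ y, y < beta → 0 < 1 - y / beta := by
    intro y hy
    have : y / beta < 1 := (div_lt_one hbeta).2 hy
    linarith
  -- g(Psi t) = -(mu t)
  have hlog : ∀ t, 0 ≤ t → g (Psi t) = -(mu * t) := by
    intro t ht
    obtain ⟨⟨h0, h1⟩, heq⟩ := hPsi t ht
    have hb := hbase _ h1
    have := congrArg Real.log heq
    rw [Real.log_mul (by positivity) (Real.exp_ne_zero _), Real.log_rpow hb,
      Real.log_exp, Real.log_one] at this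
    simp only [hg]
    linarith
  have g0 : g 0 = 0 := by simp [hg]
  -- derivative of g
  have hg' : ∀ y, y < beta → HasDerivAt g (1 - rho / (2 * (beta - y))) y := by
    intro y hy
    have hb := hbase _ hy
    have h1 : HasDerivAt (fun y : ℝ => 1 - y / beta) (-(1 / beta)) y := by
      simpa using ((hasDerivAt_id y).div_const beta).const_sub 1
    have h2 : HasDerivAt (fun y : ℝ => Real.log (1 - y / beta))
        (-(1 / beta) / (1 - y / beta)) y := h1.log (ne_of_gt hb)
    have h3 := (h2.const_mul (rho / 2)).add (hasDerivAt_id y)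
    refine h3.congr_deriv ?_
    have hby : beta - y ≠ 0 := by linarith
    field_simp [hbeta.ne']
    ring
  -- strict antitonicity of g on Ico (beta - rho/2) beta
  set D : Set ℝ := Ico (beta - rho / 2) beta with hD
  have hganti : StrictAntiOn g D := by
    apply strictAntiOn_of_deriv_neg (convex_Ico _ _)
    · intro y hy
      exact (hg' y hy.2).continuousAt.continuousWithinAt
    · intro y hy
      rw [interior_Ico] at hy
      rw [(hg' y hy.2).deriv]
      have h1 : 0 < beta - y := by linarith [hy.2]
      have h2 : beta - y < rho / 2 := by linarith [hy.1]
      rw [sub_neg, lt_div_iff₀ (by linarith : (0:ℝ) < 2 * (beta - y))]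
      linarith
  have hsubD : Ico (0:ℝ) beta ⊆ D := by
    intro y hy
    exact ⟨by linarith [hy.1], hy.2⟩
  have hmemD : ∀ t, 0 ≤ t → Psi t ∈ D := fun t ht => hsubD (hPsi t ht).1
  have h0D : (0:ℝ) ∈ D := hsubD ⟨le_refl _, hbeta⟩
  -- Psi 0 = 0
  have hPsi0 : Psi 0 = 0 := by
    have h1 : g (Psi 0) = g 0 := by rw [hlog 0 le_rfl, g0]; ring
    exact hganti.injOn (hmemD 0 le_rfl) h0D h1
  -- strict monotonicity
  have hmono : StrictMonoOn Psi (Set.Ici 0) := by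
    intro s hs t ht hst
    have h1 : g (Psi t) < g (Psi s) := by
      rw [hlog s hs, hlog t ht]
      nlinarith
    exact (hganti.lt_iff_gt (hmemD t ht) (hmemD s hs)).1 h1
  -- surjectivity onto Ico 0 beta
  have hsurj : ∀ y ∈ Ico (0:ℝ) beta, ∃ t, 0 ≤ t ∧ Psi t = y := by
    intro y hy
    have hgy : g y ≤ 0 := by
      rcases eq_or_lt_of_le hy.1 with h | h
      · rw [← h, g0]
      · have := hganti h0D (hsubD hy) h
        rw [g0] at this; linarith
    have ht : (0:ℝ) ≤ -(g y) / mu := div_nonneg (by linarith) hmu.le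
    refine ⟨-(g y) / mu, ht, ?_⟩
    have h1 : g (Psi (-(g y) / mu)) = g y := by
      rw [hlog _ ht]
      field_simp
    exact hganti.injOn (hmemD _ ht) (hsubD hy) h1
  -- continuity of Psi on Ici 0
  have hrightexists : ∀ t, 0 ≤ t → ∀ b > Psi t, ∃ c ∈ Ici (0:ℝ), Psi c ∈ Ioc (Psi t) b := by
    intro t ht b hb
    have hΨ := (hPsi t ht).1
    set w := (Psi t + min b beta) / 2 with hw
    have hw1 : Psi t < w := by
      have : Psi t < min b beta := lt_min hb hΨ.2
      simp only [hw]; linarith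
    have hw2 : w < beta := by
      have h1 : min b beta ≤ beta := min_le_right _ _
      simp only [hw]; linarith [hΨ.2]
    have hw3 : w ≤ b := by
      have h1 : min b beta ≤ b := min_le_left _ _
      simp only [hw]; linarith
    obtain ⟨c, hc, hcw⟩ := hsurj w ⟨le_trans hΨ.1 hw1.le, hw2⟩
    exact ⟨c, hc, by rw [hcw]; exact ⟨hw1, hw3⟩⟩
  have hleftexists : ∀ t, 0 < t → ∀ b < Psi t, ∃ c ∈ Ici (0:ℝ), Psi c ∈ Ico b (Psi t) := by
    intro t ht b hb
    have hΨt : 0 < Psi t := by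
      have := hmono (show (0:ℝ) ∈ Ici 0 from le_refl (0:ℝ)) ht.le ht
      rwa [hPsi0] at this
    set w := max b 0 with hw
    have hw1 : w < Psi t := max_lt hb hΨt
    obtain ⟨c, hc, hcw⟩ := hsurj w ⟨le_max_right _ _, lt_trans hw1 (hPsi t ht.le).1.2⟩
    exact ⟨c, hc, by rw [hcw]; exact ⟨le_max_left _ _, hw1⟩⟩
  have hcont : ContinuousOn Psi (Ici 0) := by
    intro t ht
    rcases eq_or_lt_of_le (show (0:ℝ) ≤ t from ht) with h | h
    · subst h
      exact hmono.continuousWithinAt_right_of_exists_between self_mem_nhdsWithin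
        (hrightexists 0 le_rfl)
    · have hIci : Ici (0:ℝ) ∈ nhds t := Ici_mem_nhds h
      have hr : ContinuousWithinAt Psi (Ici t) t :=
        hmono.continuousWithinAt_right_of_exists_between
          (mem_nhdsWithin_of_mem_nhds hIci) (hrightexists t ht)
      have hl : ContinuousWithinAt Psi (Iic t) t :=
        hmono.continuousWithinAt_left_of_exists_between
          (mem_nhdsWithin_of_mem_nhds hIci) (hleftexists t h)
      exact (hl.union hr).mono (by intro x _; exact (le_total x t).imp id id)
  -- derivative of Psi
  have hderiv : ∀ t, 0 ≤ t → HasDerivWithinAt Psi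
      (2 * mu ^ 2 * (beta - Psi t) / (lam - 2 * mu * (beta - Psi t))) (Set.Ici 0) t := by
    intro t ht
    obtain ⟨h0, h1⟩ := (hPsi t ht).1
    set c := Psi t with hc
    set G : ℝ := 1 - rho / (2 * (beta - c)) with hG
    have hbc : 0 < beta - c := by linarith
    have hGneg : G < 0 := by
      rw [hG, sub_neg, lt_div_iff₀ (by linarith : (0:ℝ) < 2 * (beta - c))]
      nlinarith
    have hGne : G ≠ 0 := ne_of_lt hGneg
    rw [hasDerivWithinAt_iff_tendsto_slope]
    have hden0 : (0:ℝ) < lam - 2 * mu * (beta - c) := by nlinarith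
    have hkey : -mu / G = 2 * mu ^ 2 * (beta - c) / (lam - 2 * mu * (beta - c)) := by
      rw [div_eq_div_iff hGne (ne_of_gt hden0), hG, hrho]
      have hbc' : beta - c ≠ 0 := ne_of_gt hbc
      field_simp
      ring
    rw [← hkey]
    -- Psi s → c with Psi s ≠ c on the punctured filter
    have htend : Filter.Tendsto Psi (nhdsWithin t (Ici 0 \ {t})) (nhdsWithin c {c}ᶜ) := by
      rw [tendsto_nhdsWithin_iff]
      constructor
      · exact ((hcont t ht).mono (diff_subset)).tendsto
      · filter_upwards [self_mem_nhdsWithin] with s hs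
        exact fun hcon => hs.2 (hmono.injOn hs.1 ht hcon)
    -- slope of g tends to G at c
    have hslopeg : Filter.Tendsto (slope g c) (nhdsWithin c {c}ᶜ) (nhds G) :=
      hasDerivAt_iff_tendsto_slope.1 (hg' c h1)
    have hcomp : Filter.Tendsto (fun s => slope g c (Psi s)) (nhdsWithin t (Ici 0 \ {t}))
        (nhds G) := hslopeg.comp htend
    have hfinal : Filter.Tendsto (fun s => -mu / slope g c (Psi s))
        (nhdsWithin t (Ici 0 \ {t})) (nhds (-mu / G)) :=
      (tendsto_const_nhds.div hcomp hGne)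
    apply hfinal.congr'
    filter_upwards [self_mem_nhdsWithin] with s hs
    have hs0 : 0 ≤ s := hs.1
    have hsne : s ≠ t := hs.2
    have hPne : Psi s ≠ c := fun hcon => hsne (hmono.injOn hs.1 ht hcon)
    have hgs' : g (Psi s) - g c = -(mu * (s - t)) := by
      rw [hlog s hs0, hlog t ht]; ring
    have hst : s - t ≠ 0 := sub_ne_zero.2 hsne
    have hPc : Psi s - c ≠ 0 := sub_ne_zero.2 hPne
    show -mu / slope g c (Psi s) = slope Psi t s
    rw [slope_def_field, slope_def_field, hgs']
    field_simp
    ring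
  -- continuity of the RHS
  have hcontR : ContinuousOn
      (fun t => 2 * mu ^ 2 * (beta - Psi t) / (lam - 2 * mu * (beta - Psi t)))
      (Set.Ici 0) := by
    apply ContinuousOn.div
    · exact continuousOn_const.mul (continuousOn_const.sub hcont)
    · exact continuousOn_const.sub (continuousOn_const.mul (continuousOn_const.sub hcont))
    · intro x hx
      have h0 := ((hPsi x hx).1).1
      nlinarith
  -- integral identity
  have hintgl : ∀ t, 0 ≤ t → Psi t =
      mu * ∫ u in (0:ℝ)..t,
        2 * mu * (beta - Psi u) / (lam - 2 * mu * (beta - Psi u)) := by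
    intro t ht
    rcases eq_or_lt_of_le ht with h | h
    · rw [← h]; simp [hPsi0]
    · have hderiv' : ∀ x ∈ Ioo (0:ℝ) t, HasDerivWithinAt Psi
          (2 * mu ^ 2 * (beta - Psi x) / (lam - 2 * mu * (beta - Psi x))) (Ioi x) x :=
        fun x hx => ((hderiv x hx.1.le).hasDerivAt (Ici_mem_nhds hx.1)).hasDerivWithinAt
      have hint : IntervalIntegrable
          (fun u => 2 * mu ^ 2 * (beta - Psi u) / (lam - 2 * mu * (beta - Psi u)))
          MeasureTheory.volume 0 t :=
        (hcontR.mono (by rw [uIcc_of_le h.le]; exact Icc_subset_Ici_self)).intervalIntegrable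
      have hftc := intervalIntegral.integral_eq_sub_of_hasDeriv_right_of_le h.le
        (hcont.mono Icc_subset_Ici_self) hderiv' hint
      rw [hPsi0] at hftc
      have heq : ∀ u, mu * (2 * mu * (beta - Psi u) / (lam - 2 * mu * (beta - Psi u)))
          = 2 * mu ^ 2 * (beta - Psi u) / (lam - 2 * mu * (beta - Psi u)) := by
        intro u
        rw [← mul_div_assoc]
        ring_nf
      calc Psi t = ∫ u in (0:ℝ)..t,
            2 * mu ^ 2 * (beta - Psi u) / (lam - 2 * mu * (beta - Psi u)) := by
            rw [hftc]; ring
        _ = ∫ u in (0:ℝ)..t,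
            mu * (2 * mu * (beta - Psi u) / (lam - 2 * mu * (beta - Psi u))) := by
            apply intervalIntegral.integral_congr
            intro u _
            exact (heq u).symm
        _ = mu * ∫ u in (0:ℝ)..t,
            2 * mu * (beta - Psi u) / (lam - 2 * mu * (beta - Psi u)) :=
            intervalIntegral.integral_const_mul mu _
  exact ⟨hPsi0, hmono, fun t ht => ⟨(hPsi t ht).1.1, (hPsi t ht).1.2⟩, hderiv, hcontR, hintgl⟩
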